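/- Let R be a commutative ring, W_{D^n} = R[X_1,...,X_n]/(X_1^2,...,X_n^2), and W_{D_n} = R[T]/(T^{n+1}). The R-algebra map σ : W_{D_n} → W_{D^n} induced by T ↦ X_1 + ... + X_n is the equalizer of the n−1 transposition automorphisms τ_i of W_{D^n} (swapping X_i and X_{i+1}) against the identity: an element of W_{D^n} is fixed by all τ_i if and only if it lies in the image of σ, and σ is injective provided n! is invertible in R. -/

import Mathlib

set_option synthInstance.maxHeartbeats 1000000
set_option maxHeartbeats 1000000

open Finset

/-- The Weil algebra `W_{D_n} = R[T]/(T^{n+1})`. -/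
abbrev WeilDn (R : Type*) [CommRing R] (n : ℕ) : Type _ :=
  Polynomial R ⧸ Ideal.span {(Polynomial.X : Polynomial R) ^ (n + 1)}

/-- The ideal `(X₁²,...,Xₙ²)` of `R[X₁,...,Xₙ]`. -/
noncomputable abbrev sqIdeal (R : Type*) [CommRing R] (n : ℕ) : Ideal (MvPolynomial (Fin n) R) :=
  Ideal.span (Set.range fun i : Fin n => (MvPolynomial.X i : MvPolynomial (Fin n) R) ^ 2)

/-- The Weil algebra `W_{D^n} = R[X₁,...,Xₙ]/(X₁²,...,Xₙ²)`. -/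
abbrev WeilDpow (R : Type*) [CommRing R] (n : ℕ) : Type _ :=
  MvPolynomial (Fin n) R ⧸ sqIdeal R n

namespace WeilAux

open MvPolynomial

variable {R : Type*} [CommRing R] {n : ℕ}

/-- indicator finsupp of a finset -/
def indF {N : ℕ} (T : Finset (Fin N)) : Fin N →₀ ℕ :=
  ⟨T, fun i => if i ∈ T then 1 else 0, fun i => by simp⟩

@[simp] lemma indF_apply {N : ℕ} (T : Finset (Fin N)) (i : Fin N) :
    indF T i = if i ∈ T then 1 else 0 := rfl

lemma indF_sqfree {N : ℕ} (T : Finset (Fin N)) : ∀ i, indF T i ≤ 1 := by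
  intro i; rw [indF_apply]; split <;> simp

lemma indF_sum {N : ℕ} (T : Finset (Fin N)) : (∑ i, indF T i) = T.card := by
  simp [indF_apply, Finset.sum_ite_mem]

lemma sqfree_eq_indF (d : Fin n →₀ ℕ) (hd : ∀ i, d i ≤ 1) : d = indF d.support := by
  ext i
  rw [indF_apply]
  rcases eq_or_ne (d i) 0 with h | h
  · simp [h, Finsupp.mem_support_iff]
  · have := hd i
    simp [Finsupp.mem_support_iff, h]
    omega

lemma sqfree_sum_eq_card (d : Fin n →₀ ℕ) (hd : ∀ i, d i ≤ 1) :
    (∑ i, d i) = d.support.card := by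
  conv_lhs => rw [sqfree_eq_indF d hd]
  rw [indF_sum]

lemma coeff_mul_eq_zero {x : MvPolynomial (Fin n) R}
    (h : ∀ d : Fin n →₀ ℕ, (∀ i, d i ≤ 1) → coeff d x = 0)
    (a : MvPolynomial (Fin n) R) (d : Fin n →₀ ℕ) (hd : ∀ i, d i ≤ 1) :
    coeff d (a * x) = 0 := by
  rw [coeff_mul]
  apply Finset.sum_eq_zero
  rintro ⟨u, v⟩ hm
  rw [Finset.HasAntidiagonal.mem_antidiagonal] at hm
  have hv : ∀ i, v i ≤ 1 := fun i => le_trans (by simp [← hm]) (hd i)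
  rw [h v hv, mul_zero]

lemma mem_sqIdeal_iff (p : MvPolynomial (Fin n) R) :
    p ∈ sqIdeal R n ↔ ∀ d : Fin n →₀ ℕ, (∀ i, d i ≤ 1) → coeff d p = 0 := by
  constructor
  · intro hp
    refine Submodule.span_induction ?_ ?_ ?_ ?_ hp
    · rintro x ⟨i, rfl⟩ d hd
      show coeff d (X i ^ 2) = 0
      rw [X_pow_eq_monomial, coeff_monomial]
      split
      · next h =>
        exfalso
        have := hd i
        rw [← h] at this
        simp at this
      · rfl
    · intro d hd; simp
    · intro x y _ _ hx hy d hd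
      rw [coeff_add, hx d hd, hy d hd, add_zero]
    · intro a x _ hx d hd
      rw [smul_eq_mul]
      exact coeff_mul_eq_zero hx a d hd
  · intro h
    rw [as_sum p]
    refine Ideal.sum_mem _ ?_
    intro d hd
    by_cases hsq : ∀ i, d i ≤ 1
    · rw [h d hsq]; simp
    · push_neg at hsq
      obtain ⟨i, hi⟩ := hsq
      have h2 : Finsupp.single i 2 ≤ d := by
        rw [Finsupp.single_le_iff]; omega
      have : (monomial d) (coeff d p) =
          X i ^ 2 * (monomial (d - Finsupp.single i 2)) (coeff d p) := by
        rw [X_pow_eq_monomial, monomial_mul, one_mul, add_tsub_cancel_of_le h2]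
      rw [this]
      exact Ideal.mul_mem_right _ _ (Ideal.subset_span ⟨i, rfl⟩)

lemma prod_X_pow_univ (f : Fin n → ℕ) :
    (∏ i : Fin n, (X i : MvPolynomial (Fin n) R) ^ f i) =
      monomial (Finsupp.equivFunOnFinite.symm f) 1 := by
  rw [← prod_X_pow_eq_monomial]
  rw [eq_comm]
  apply Finset.prod_subset (Finset.subset_univ _)
  intro i _ hi
  rw [Finsupp.notMem_support_iff] at hi
  simp only [Finsupp.coe_equivFunOnFinite_symm] at hi ⊢
  rw [hi, pow_zero]

lemma multinomial_sqfree (d : Fin n →₀ ℕ) (hd : ∀ i, d i ≤ 1) :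
    Nat.multinomial Finset.univ ⇑d = (∑ i, d i).factorial := by
  have h := Nat.multinomial_spec Finset.univ ⇑d
  have h1 : (∏ i : Fin n, (d i).factorial) = 1 := by
    apply Finset.prod_eq_one
    intro i _
    have := hd i
    interval_cases (d i) <;> simp
  rw [h1, one_mul] at h
  exact h

lemma coeff_S_pow (k : ℕ) (d : Fin n →₀ ℕ) (hd : ∀ i, d i ≤ 1) :
    coeff d ((∑ i, X i : MvPolynomial (Fin n) R) ^ k) =
      if (∑ i, d i) = k then ((k.factorial : ℕ) : R) else 0 := by
  rw [Finset.sum_pow_eq_sum_piAntidiag, coeff_sum]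
  have key : ∀ f : Fin n → ℕ,
      coeff d ((Nat.multinomial Finset.univ f : MvPolynomial (Fin n) R) *
        ∏ i : Fin n, X i ^ f i) =
      if f = ⇑d then ((Nat.multinomial Finset.univ f : ℕ) : R) else 0 := by
    intro f
    rw [prod_X_pow_univ]
    have hc : ((Nat.multinomial Finset.univ f : ℕ) : MvPolynomial (Fin n) R) =
        C ((Nat.multinomial Finset.univ f : ℕ) : R) := by
      simp
    rw [hc, coeff_C_mul, coeff_monomial]
    by_cases hf : f = ⇑d
    · subst hf
      rw [if_pos (Finsupp.equivFunOnFinite_symm_coe d), if_pos rfl, mul_one]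
    · rw [if_neg, if_neg hf, mul_zero]
      intro h
      apply hf
      have := congrArg (⇑Finsupp.equivFunOnFinite) h
      simp at this; exact this
  simp only [key]
  rw [Finset.sum_ite_eq' (piAntidiag Finset.univ k) (⇑d)
    (fun f => ((Nat.multinomial Finset.univ f : ℕ) : R))]
  by_cases hmem : ⇑d ∈ piAntidiag Finset.univ k
  · have hk : (∑ i, d i) = k := (Finset.mem_piAntidiag.mp hmem).1
    rw [if_pos hmem, if_pos hk, multinomial_sqfree d hd, hk]
  · have hk : ¬ (∑ i, d i) = k := by
      intro h
      exact hmem (Finset.mem_piAntidiag.mpr ⟨h, fun i _ => Finset.mem_univ i⟩)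
    rw [if_neg hmem, if_neg hk]

lemma rename_mem_sqIdeal (e : Equiv.Perm (Fin n)) {p : MvPolynomial (Fin n) R}
    (hp : p ∈ sqIdeal R n) : rename ⇑e p ∈ sqIdeal R n := by
  rw [mem_sqIdeal_iff] at hp ⊢
  intro d hd
  have hmap : d = Finsupp.mapDomain ⇑e (Finsupp.mapDomain ⇑e.symm d) := by
    rw [← Finsupp.mapDomain_comp, Equiv.self_comp_symm, Finsupp.mapDomain_id]
  rw [hmap, coeff_rename_mapDomain _ e.injective]
  apply hp
  intro i
  rw [Finsupp.mapDomain_equiv_apply]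
  simp only [Equiv.symm_symm]
  exact hd (e i)

lemma coeff_aeval_S (f : Polynomial R) (d : Fin n →₀ ℕ) (hd : ∀ i, d i ≤ 1) :
    coeff d (Polynomial.aeval (∑ i, X i : MvPolynomial (Fin n) R) f) =
      f.coeff (∑ i, d i) * (((∑ i, d i).factorial : ℕ) : R) := by
  rw [Polynomial.aeval_def, Polynomial.eval₂_eq_sum, Polynomial.sum_def, coeff_sum]
  have key : ∀ k, coeff d (algebraMap R (MvPolynomial (Fin n) R) (f.coeff k) *
      (∑ i, X i : MvPolynomial (Fin n) R) ^ k) =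
      if (∑ i, d i) = k then f.coeff k * (((∑ i, d i).factorial : ℕ) : R) else 0 := by
    intro k
    rw [algebraMap_eq, coeff_C_mul, coeff_S_pow k d hd]
    by_cases hk : (∑ i, d i) = k
    · rw [if_pos hk, if_pos hk, hk]
    · rw [if_neg hk, if_neg hk, mul_zero]
  simp only [key]
  rw [Finset.sum_ite_eq (f.support) (∑ i, d i)
    (fun x => f.coeff x * (((∑ i, d i).factorial : ℕ) : R))]
  by_cases hmem : (∑ i, d i) ∈ f.support
  · rw [if_pos hmem]
  · rw [if_neg hmem, Polynomial.notMem_support_iff.mp hmem, zero_mul]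

lemma exists_perm_finset {N : ℕ} (S T : Finset (Fin N)) (h : S.card = T.card) :
    ∃ e : Equiv.Perm (Fin N), ∀ a, a ∈ S ↔ e a ∈ T := by
  classical
  have h' : Sᶜ.card = Tᶜ.card := by simp [Finset.card_compl, h]
  let eS : {x // x ∈ S} ≃ {x // x ∈ T} := Finset.equivOfCardEq h
  let eC : {x // x ∈ Sᶜ} ≃ {x // x ∈ Tᶜ} := Finset.equivOfCardEq h'
  let q1 : {x : Fin N // ¬ x ∈ S} ≃ {x // x ∈ Sᶜ} :=
    Equiv.subtypeEquivRight (fun x => (Finset.mem_compl).symm)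
  let q2 : {x // x ∈ Tᶜ} ≃ {x : Fin N // ¬ x ∈ T} :=
    Equiv.subtypeEquivRight (fun x => Finset.mem_compl)
  refine ⟨(Equiv.sumCompl (· ∈ S)).symm.trans
    ((eS.sumCongr ((q1.trans eC).trans q2)).trans (Equiv.sumCompl (· ∈ T))), ?_⟩
  intro a
  by_cases ha : a ∈ S
  · simp only [Equiv.trans_apply, Equiv.sumCompl_symm_apply_of_pos ha,
      Equiv.sumCongr_apply, Sum.map_inl, Equiv.sumCompl_apply_inl]
    exact ⟨fun _ => (eS ⟨a, ha⟩).2, fun _ => ha⟩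
  · simp only [Equiv.trans_apply, Equiv.sumCompl_symm_apply_of_neg ha,
      Equiv.sumCongr_apply, Sum.map_inr, Equiv.sumCompl_apply_inr]
    exact ⟨fun h => absurd h ha, fun h => absurd ((q1.trans eC).trans q2 ⟨a, ha⟩).2 (by simpa using h)⟩

end WeilAux

open WeilAux MvPolynomial in
/-- Lemma 7.1.2 ... -/
theorem weilDn_symmetric_equalizer {R : Type*} [CommRing R] (m : ℕ)
    (hfac : IsUnit ((Nat.factorial (m + 1) : R)))
    (σ : WeilDn R (m + 1) →ₐ[R] WeilDpow R (m + 1))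
    (hσ : σ (Ideal.Quotient.mk _ (Polynomial.X : Polynomial R)) =
      Ideal.Quotient.mk (sqIdeal R (m + 1)) (∑ i, MvPolynomial.X i))
    (τ : Fin m → (WeilDpow R (m + 1) →ₐ[R] WeilDpow R (m + 1)))
    (hτ : ∀ (i : Fin m) (k : Fin (m + 1)),
      τ i (Ideal.Quotient.mk (sqIdeal R (m + 1)) (MvPolynomial.X k)) =
        Ideal.Quotient.mk (sqIdeal R (m + 1))
          (MvPolynomial.X (Equiv.swap i.castSucc i.succ k))) :
    (∀ a : WeilDpow R (m + 1), (∀ i : Fin m, τ i a = a) ↔ a ∈ σ.range) ∧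
      Function.Injective σ := by
  classical
  set S : MvPolynomial (Fin (m + 1)) R := ∑ i, X i with hS
  -- k! is a unit for k ≤ m + 1
  have hunit : ∀ k, k ≤ m + 1 → IsUnit ((k.factorial : ℕ) : R) := by
    intro k hk
    obtain ⟨c, hc⟩ := Nat.factorial_dvd_factorial hk
    refine isUnit_of_mul_isUnit_left (y := (c : R)) ?_
    rw [← Nat.cast_mul, ← hc]
    exact hfac
  -- σ on classes of polynomials
  have hσ' : ∀ f : Polynomial R,
      σ (Ideal.Quotient.mk _ f) = Ideal.Quotient.mk (sqIdeal R (m + 1)) (Polynomial.aeval S f) := by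
    have hcomp : σ.comp (Ideal.Quotient.mkₐ R (Ideal.span
          {(Polynomial.X : Polynomial R) ^ (m + 1 + 1)})) =
        (Ideal.Quotient.mkₐ R (sqIdeal R (m + 1))).comp (Polynomial.aeval S) :=
      Polynomial.algHom_ext (by simpa [Ideal.Quotient.mkₐ_eq_mk] using hσ)
    intro f
    have := AlgHom.congr_fun hcomp f
    simpa [Ideal.Quotient.mkₐ_eq_mk] using this
  -- τ on classes of polynomials
  have hτ' : ∀ (i : Fin m) (p : MvPolynomial (Fin (m + 1)) R),
      τ i (Ideal.Quotient.mk (sqIdeal R (m + 1)) p) =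
        Ideal.Quotient.mk (sqIdeal R (m + 1)) (rename ⇑(Equiv.swap i.castSucc i.succ) p) := by
    intro i
    have hcomp : (τ i).comp (Ideal.Quotient.mkₐ R (sqIdeal R (m + 1))) =
        (Ideal.Quotient.mkₐ R (sqIdeal R (m + 1))).comp (rename ⇑(Equiv.swap i.castSucc i.succ)) :=
      MvPolynomial.algHom_ext fun k => by
        simpa [Ideal.Quotient.mkₐ_eq_mk, rename_X] using hτ i k
    intro p
    have := AlgHom.congr_fun hcomp p
    simpa [Ideal.Quotient.mkₐ_eq_mk] using this
  have hSsymm : ∀ e : Equiv.Perm (Fin (m + 1)), rename ⇑e S = S := by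
    intro e
    rw [hS, map_sum]
    simp only [rename_X]
    exact Equiv.sum_comp e (fun i => (X i : MvPolynomial (Fin (m + 1)) R))
  constructor
  · intro a
    constructor
    · -- fixed ⇒ in range
      intro hfix
      obtain ⟨p, rfl⟩ := Ideal.Quotient.mk_surjective a
      have hall : ∀ e : Equiv.Perm (Fin (m + 1)),
          Ideal.Quotient.mk (sqIdeal R (m + 1)) (rename ⇑e p) = Ideal.Quotient.mk (sqIdeal R (m + 1)) p := by
        intro e
        have hmem : e ∈ Submonoid.closure
            (Set.range fun i : Fin m => Equiv.swap i.castSucc i.succ) := by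
          rw [Equiv.Perm.mclosure_swap_castSucc_succ]
          exact Submonoid.mem_top e
        refine Submonoid.closure_induction ?_ ?_ ?_ hmem
        · rintro x ⟨i, rfl⟩
          rw [← hτ' i p]
          exact hfix i
        · show Ideal.Quotient.mk (sqIdeal R (m + 1)) (rename ⇑(1 : Equiv.Perm (Fin (m + 1))) p) = _
          rw [Equiv.Perm.coe_one, rename_id, AlgHom.id_apply]
        · intro x y _ _ hx hy
          rw [Equiv.Perm.coe_mul, ← rename_rename]
          rw [Ideal.Quotient.eq] at hy ⊢
          have heq : rename ⇑x (rename ⇑y p) - p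
              = rename ⇑x (rename ⇑y p - p) + (rename ⇑x p - p) := by
            rw [map_sub]; ring
          rw [heq]
          exact Ideal.add_mem _ (rename_mem_sqIdeal x hy) (Ideal.Quotient.eq.mp hx)
      -- coefficients constant on squarefree monomials of equal degree
      have htrans : ∀ d d' : Fin (m + 1) →₀ ℕ, (∀ i, d i ≤ 1) → (∀ i, d' i ≤ 1) →
          (∑ i, d i) = (∑ i, d' i) → coeff d p = coeff d' p := by
        intro d d' hd hd' hsum
        have hcard : d'.support.card = d.support.card := by
          rw [← sqfree_sum_eq_card d hd, ← sqfree_sum_eq_card d' hd', hsum]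
        obtain ⟨e, he⟩ := exists_perm_finset d'.support d.support hcard
        have hmap : Finsupp.mapDomain ⇑e d' = d := by
          ext j
          rw [Finsupp.mapDomain_equiv_apply]
          have h1 : d' (e.symm j) = if e.symm j ∈ d'.support then 1 else 0 := by
            conv_lhs => rw [sqfree_eq_indF d' hd']
            rfl
          have h2 : d j = if j ∈ d.support then 1 else 0 := by
            conv_lhs => rw [sqfree_eq_indF d hd]
            rfl
          rw [h1, h2]
          have := he (e.symm j)
          rw [Equiv.apply_symm_apply] at this
          simp [this]
        have hco : coeff d (rename ⇑e p) = coeff d p := by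
          have hmemI := Ideal.Quotient.eq.mp (hall e)
          have := (mem_sqIdeal_iff _).mp hmemI d hd
          rw [coeff_sub] at this
          exact sub_eq_zero.mp this
        rw [← hco, ← hmap, coeff_rename_mapDomain _ e.injective]
      -- choose representative sets
      have hcard : ∀ k : ℕ, k ≤ m + 1 → ∃ T : Finset (Fin (m + 1)), T.card = k := by
        intro k hk
        obtain ⟨T, -, hT⟩ := Finset.exists_subset_card_eq
          (show k ≤ (Finset.univ : Finset (Fin (m + 1))).card by simpa using hk)
        exact ⟨T, hT⟩
      set c : ℕ → R := fun k =>
        if h : k ≤ m + 1 then coeff (indF (hcard k h).choose) p else 0 with hc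
      set f : Polynomial R := ∑ k ∈ Finset.range (m + 1 + 1),
        Polynomial.C (Ring.inverse ((k.factorial : ℕ) : R) * c k) * Polynomial.X ^ k with hf
      refine ⟨Ideal.Quotient.mk _ f, ?_⟩
      show σ (Ideal.Quotient.mk _ f) = Ideal.Quotient.mk (sqIdeal R (m + 1)) p
      rw [hσ' f, Ideal.Quotient.eq]
      rw [mem_sqIdeal_iff]
      intro d hd
      rw [coeff_sub, sub_eq_zero]
      set K := ∑ i, d i with hK
      have hKn : K ≤ m + 1 := by
        rw [hK, sqfree_sum_eq_card d hd]
        calc d.support.card ≤ (Finset.univ : Finset (Fin (m + 1))).card := Finset.card_le_univ _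
        _ = m + 1 := by simp
      have hfK : f.coeff K = Ring.inverse ((K.factorial : ℕ) : R) * c K := by
        rw [hf, Polynomial.finset_sum_coeff]
        simp only [Polynomial.coeff_C_mul, Polynomial.coeff_X_pow]
        rw [Finset.sum_congr rfl (fun k _ => by
          rw [mul_ite, mul_one, mul_zero])]
        rw [Finset.sum_ite_eq (Finset.range (m + 1 + 1)) K
          (fun k => Ring.inverse ((k.factorial : ℕ) : R) * c k)]
        rw [if_pos (Finset.mem_range.mpr (by omega))]
      rw [coeff_aeval_S f d hd, ← hK, hfK]
      have hcK : c K = coeff d p := by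
        rw [hc]
        simp only [dif_pos hKn]
        apply htrans
        · exact indF_sqfree _
        · exact hd
        · rw [indF_sum, (hcard K hKn).choose_spec, hK]
      rw [hcK]
      rw [mul_comm (Ring.inverse _) _, mul_assoc, Ring.inverse_mul_cancel _ (hunit K hKn), mul_one]
    · -- in range ⇒ fixed
      rintro ⟨x, rfl⟩ i
      obtain ⟨g, rfl⟩ := Ideal.Quotient.mk_surjective x
      show τ i (σ (Ideal.Quotient.mk _ g)) = σ (Ideal.Quotient.mk _ g)
      rw [hσ' g, hτ' i]
      congr 1
      rw [← Polynomial.aeval_algHom_apply (rename ⇑(Equiv.swap i.castSucc i.succ)) S g,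
        hSsymm]
  · -- injectivity
    have hker : ∀ g : Polynomial R, σ (Ideal.Quotient.mk _ g) = 0 →
        Ideal.Quotient.mk (Ideal.span {(Polynomial.X : Polynomial R) ^ (m + 1 + 1)}) g = 0 := by
      intro g hg
      rw [hσ' g, Ideal.Quotient.eq_zero_iff_mem, mem_sqIdeal_iff] at hg
      rw [Ideal.Quotient.eq_zero_iff_mem, Ideal.mem_span_singleton]
      rw [Polynomial.X_pow_dvd_iff]
      intro k hk
      have hk' : k ≤ m + 1 := by omega
      obtain ⟨T, -, hTcard⟩ := Finset.exists_subset_card_eq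
        (show k ≤ (Finset.univ : Finset (Fin (m + 1))).card by simpa using hk')
      have h0 := hg (indF T) (indF_sqfree T)
      rw [coeff_aeval_S g (indF T) (indF_sqfree T), indF_sum, hTcard] at h0
      have hu := hunit k hk'
      have := mul_eq_zero_of_left h0 (↑(Ring.inverse ((k.factorial : ℕ) : R)))
      rw [mul_assoc, Ring.mul_inverse_cancel _ hu, mul_one] at this
      exact this
    intro a b hab
    obtain ⟨g1, rfl⟩ := Ideal.Quotient.mk_surjective a
    obtain ⟨g2, rfl⟩ := Ideal.Quotient.mk_surjective b
    have h0 : σ (Ideal.Quotient.mk _ (g1 - g2)) = 0 := by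
      rw [map_sub, map_sub, hab, sub_self]
    have := hker _ h0
    rw [map_sub, sub_eq_zero] at this
    exact this
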